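/- Let C = {0, 1, τ, τ², τ³, …} be the free commutative monoid on one generator τ with an absorbing zero adjoined. The prime congruences on C are exactly: the diagonal Δ; the congruence with classes {0, τ, τ², …} and {1} (i.e. τ ∼ 0); and for each n ≥ 1 the congruence given by τ^a ∼ τ^b iff n divides a − b (i.e. τⁿ ∼ 1), and all of these are distinct. -/

import Mathlib

/-- A congruence `E` on a commutative monoid with zero is prime if `1 ≁ 0` and
`a·f ∼ b·f` implies `a ∼ b` or `f ∼ 0`. -/
def IsPrimeCon {A : Type*} [CommMonoidWithZero A] (E : Con A) : Prop :=
  ¬ E 1 0 ∧ ∀ a b f : A, E (a * f) (b * f) → E a b ∨ E f 0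

/-- The free commutative monoid on one generator `τ` with an absorbing zero adjoined:
`C = {0, 1, τ, τ², …}`. -/
abbrev FreeMonoidZero : Type := WithZero (Multiplicative ℕ)

/-- The generator `τ`. -/
def tau : FreeMonoidZero := ((Multiplicative.ofAdd 1 : Multiplicative ℕ) : FreeMonoidZero)

/-- `E` is the diagonal congruence `Δ`. -/
def IsDiagCon (E : Con FreeMonoidZero) : Prop := ∀ x y, E x y ↔ x = y

/-- `E` is the congruence `τ ∼ 0`, with the two classes `{0, τ, τ², …}` and `{1}`. -/
def IsTauZeroCon (E : Con FreeMonoidZero) : Prop :=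
  ∀ x y, E x y ↔ ((x = 1 ∧ y = 1) ∨ (x ≠ 1 ∧ y ≠ 1))

/-- `E` is the congruence `τⁿ ∼ 1`, given by `τ^a ∼ τ^b ↔ n ∣ a - b`. -/
def IsTauNCon (n : ℕ) (E : Con FreeMonoidZero) : Prop :=
  ∀ x y, E x y ↔ ((x = 0 ∧ y = 0) ∨
    ∃ a b : ℕ, x = tau ^ a ∧ y = tau ^ b ∧ (n : ℤ) ∣ (a : ℤ) - (b : ℤ))

/- ### Auxiliary lemmas -/

lemma tau_pow (a : ℕ) : tau ^ a = ((Multiplicative.ofAdd a : Multiplicative ℕ) : FreeMonoidZero) := by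
  rw [tau, ← WithZero.coe_pow]; norm_cast; rw [← ofAdd_nsmul]; simp

lemma tau_pow_ne_zero (a : ℕ) : (tau : FreeMonoidZero) ^ a ≠ 0 := by
  rw [tau_pow]; exact WithZero.coe_ne_zero

lemma tau_pow_inj {a b : ℕ} (h : (tau : FreeMonoidZero) ^ a = tau ^ b) : a = b := by
  rw [tau_pow, tau_pow] at h
  exact_mod_cast WithZero.coe_inj.mp h

lemma exists_tau_pow {x : FreeMonoidZero} (hx : x ≠ 0) : ∃ a : ℕ, x = tau ^ a := by
  induction x using WithZero.recZeroCoe with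
  | zero => exact absurd rfl hx
  | coe m => exact ⟨Multiplicative.toAdd m, by rw [tau_pow]; simp⟩

lemma tau_ne_one : (tau : FreeMonoidZero) ≠ 1 := by
  intro h
  have : (1 : ℕ) = 0 := tau_pow_inj (a := 1) (b := 0) (by simpa using h)
  omega

lemma tau_mul_eq_one {x y : FreeMonoidZero} (h : x * y = 1) : x = 1 ∧ y = 1 := by
  have hx : x ≠ 0 := fun h0 => by simp [h0] at h
  have hy : y ≠ 0 := fun h0 => by simp [h0] at h
  obtain ⟨a, rfl⟩ := exists_tau_pow hx
  obtain ⟨b, rfl⟩ := exists_tau_pow hy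
  rw [← pow_add] at h
  have : a + b = 0 := tau_pow_inj (by simpa using h)
  obtain ⟨ha, hb⟩ : a = 0 ∧ b = 0 := by omega
  simp [ha, hb]

lemma tau_cancel {a b f : FreeMonoidZero} (hf : f ≠ 0) (h : a * f = b * f) : a = b := by
  obtain ⟨k, rfl⟩ := exists_tau_pow hf
  rcases eq_or_ne a 0 with rfl | ha
  · rcases eq_or_ne b 0 with rfl | hb
    · rfl
    · obtain ⟨j, rfl⟩ := exists_tau_pow hb
      rw [zero_mul, ← pow_add] at h
      exact absurd h.symm (tau_pow_ne_zero _)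
  · obtain ⟨i, rfl⟩ := exists_tau_pow ha
    rcases eq_or_ne b 0 with rfl | hb
    · rw [zero_mul, ← pow_add] at h
      exact absurd h (tau_pow_ne_zero _)
    · obtain ⟨j, rfl⟩ := exists_tau_pow hb
      rw [← pow_add, ← pow_add] at h
      have := tau_pow_inj h
      congr 1
      omega

lemma diag_prime {E : Con FreeMonoidZero} (h : IsDiagCon E) : IsPrimeCon E := by
  constructor
  · rw [h]; exact one_ne_zero
  · intro a b f hab
    rw [h] at hab
    rcases eq_or_ne f 0 with rfl | hf
    · exact Or.inr (E.refl 0)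
    · exact Or.inl ((h a b).mpr (tau_cancel hf hab))

lemma tauZero_prime {E : Con FreeMonoidZero} (h : IsTauZeroCon E) : IsPrimeCon E := by
  constructor
  · rw [h]
    rintro (⟨-, h0⟩ | ⟨h1, -⟩)
    · exact one_ne_zero h0.symm
    · exact h1 rfl
  · intro a b f hab
    rw [h] at hab
    rcases hab with ⟨ha, hb⟩ | ⟨ha, hb⟩
    · obtain ⟨ha1, -⟩ := tau_mul_eq_one ha
      obtain ⟨hb1, -⟩ := tau_mul_eq_one hb
      exact Or.inl ((h a b).mpr (Or.inl ⟨ha1, hb1⟩))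
    · rcases eq_or_ne f 1 with rfl | hf
      · rw [mul_one] at ha hb
        exact Or.inl ((h a b).mpr (Or.inr ⟨ha, hb⟩))
      · exact Or.inr ((h f 0).mpr (Or.inr ⟨hf, fun h0 => one_ne_zero h0.symm⟩))

lemma tauN_prime {n : ℕ} {E : Con FreeMonoidZero} (h : IsTauNCon n E) : IsPrimeCon E := by
  constructor
  · rw [h]
    rintro (⟨h0, -⟩ | ⟨a, b, -, h0, -⟩)
    · exact one_ne_zero h0
    · exact tau_pow_ne_zero b h0.symm
  · intro a b f hab
    rw [h] at hab
    rcases hab with ⟨ha, hb⟩ | ⟨p, q, hp, hq, hd⟩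
    · rcases eq_or_ne f 0 with rfl | hf
      · exact Or.inr ((h 0 0).mpr (Or.inl ⟨rfl, rfl⟩))
      · rcases mul_eq_zero.mp ha with rfl | h0
        · rcases mul_eq_zero.mp hb with rfl | h0
          · exact Or.inl (E.refl 0)
          · exact absurd h0 hf
        · exact absurd h0 hf
    · have ha0 : a ≠ 0 := fun h0 => tau_pow_ne_zero p (by rw [← hp, h0, zero_mul])
      have hb0 : b ≠ 0 := fun h0 => tau_pow_ne_zero q (by rw [← hq, h0, zero_mul])
      have hf0 : f ≠ 0 := fun h0 => tau_pow_ne_zero p (by rw [← hp, h0, mul_zero])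
      obtain ⟨i, rfl⟩ := exists_tau_pow ha0
      obtain ⟨j, rfl⟩ := exists_tau_pow hb0
      obtain ⟨k, rfl⟩ := exists_tau_pow hf0
      rw [← pow_add] at hp hq
      have hik : i + k = p := tau_pow_inj hp
      have hjk : j + k = q := tau_pow_inj hq
      refine Or.inl ((h _ _).mpr (Or.inr ⟨i, j, rfl, rfl, ?_⟩))
      have heq : (i : ℤ) - j = (p : ℤ) - q := by omega
      rw [heq]; exact hd

lemma tauN_pow_iff {n : ℕ} {E : Con FreeMonoidZero} (h : IsTauNCon n E) (a b : ℕ) :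
    E (tau ^ a) (tau ^ b) ↔ (n : ℤ) ∣ (a : ℤ) - (b : ℤ) := by
  rw [h]
  constructor
  · rintro (⟨h0, -⟩ | ⟨a', b', ha, hb, hd⟩)
    · exact absurd h0 (tau_pow_ne_zero a)
    · rwa [tau_pow_inj ha, tau_pow_inj hb]
  · intro hd
    exact Or.inr ⟨a, b, rfl, rfl, hd⟩

lemma prime_classify {E : Con FreeMonoidZero} (hp : IsPrimeCon E) :
    IsDiagCon E ∨ IsTauZeroCon E ∨ ∃ n : ℕ, 1 ≤ n ∧ IsTauNCon n E := by
  obtain ⟨h10, hpr⟩ := hp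
  by_cases htz : E tau 0
  · right; left
    have key : ∀ x : FreeMonoidZero, x ≠ 1 → E x 0 := by
      intro x hx
      rcases eq_or_ne x 0 with rfl | hx0
      · exact E.refl 0
      · obtain ⟨a, rfl⟩ := exists_tau_pow hx0
        obtain ⟨b, rfl⟩ : ∃ b, a = b + 1 := by
          have : a ≠ 0 := fun h0 => hx (by rw [h0, pow_zero])
          exact ⟨a - 1, by omega⟩
        have := E.mul (E.refl (tau ^ b)) htz
        rw [mul_zero] at this
        rw [pow_succ]
        exact this
    intro x y
    constructor
    · intro hxy
      by_cases hx : x = 1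
      · subst hx
        left
        refine ⟨rfl, ?_⟩
        by_contra hy
        exact h10 (E.trans hxy (key y hy))
      · right
        refine ⟨hx, fun hy => ?_⟩
        subst hy
        exact h10 (E.trans (E.symm hxy) (key x hx))
    · rintro (⟨rfl, rfl⟩ | ⟨hx, hy⟩)
      · exact E.refl 1
      · exact E.trans (key x hx) (E.symm (key y hy))
  · have hne0 : ∀ a : ℕ, ¬ E (tau ^ a) 0 := by
      intro a
      induction a with
      | zero => simpa using h10
      | succ m ih =>
        intro hc
        have : E (tau ^ m * tau) (0 * tau) := by
          rw [zero_mul, ← pow_succ]; exact hc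
        rcases hpr _ _ _ this with h' | h'
        · exact ih h'
        · exact htz h'
    have hzero : ∀ x, E x 0 → x = 0 := by
      intro x hx
      by_contra h0
      obtain ⟨a, rfl⟩ := exists_tau_pow h0
      exact hne0 a hx
    have hcancel : ∀ a b c : ℕ, E (tau ^ (a + c)) (tau ^ (b + c)) → E (tau ^ a) (tau ^ b) := by
      intro a b c hc
      rw [pow_add, pow_add] at hc
      rcases hpr _ _ _ hc with h' | h'
      · exact h'
      · exact absurd h' (hne0 c)
    by_cases hd : ∀ a : ℕ, 1 ≤ a → ¬ E (tau ^ a) 1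
    · left
      intro x y
      refine ⟨?_, fun hxy => hxy ▸ E.refl x⟩
      intro hxy
      rcases eq_or_ne x 0 with rfl | hx0
      · exact (hzero y (E.symm hxy)).symm
      obtain ⟨a, rfl⟩ := exists_tau_pow hx0
      have hy0 : y ≠ 0 := fun h0 => hne0 a (h0 ▸ hxy)
      obtain ⟨b, rfl⟩ := exists_tau_pow hy0
      have hab : ∀ i j : ℕ, i < j → ¬ E (tau ^ j) (tau ^ i) := by
        intro i j hij hc
        have h1 : E (tau ^ ((j - i) + i)) (tau ^ (0 + i)) := by
          rw [Nat.sub_add_cancel hij.le, zero_add]; exact hc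
        have h2 := hcancel _ _ _ h1
        rw [pow_zero] at h2
        exact hd (j - i) (by omega) h2
      rcases lt_trichotomy a b with hlt | heq | hlt
      · exact absurd (E.symm hxy) (hab a b hlt)
      · rw [heq]
      · exact absurd hxy (hab b a hlt)
    · right; right
      push_neg at hd
      have hex : ∃ a : ℕ, 1 ≤ a ∧ E (tau ^ a) 1 := hd
      classical
      obtain ⟨hn1, hnE⟩ := Nat.find_spec hex
      set n := Nat.find hex with hn
      have hmin : ∀ m, m < n → ¬ (1 ≤ m ∧ E (tau ^ m) 1) := fun m hm => Nat.find_min hex hm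
      refine ⟨n, hn1, ?_⟩
      have hmul : ∀ k : ℕ, E (tau ^ (n * k)) 1 := by
        intro k
        induction k with
        | zero => simpa using E.refl 1
        | succ m ih =>
          have h1 := E.mul ih hnE
          rw [one_mul, ← pow_add] at h1
          have harith : n * m + n = n * (m + 1) := by ring
          rwa [harith] at h1
      have keyfwd : ∀ a b : ℕ, b ≤ a → E (tau ^ a) (tau ^ b) → (n : ℤ) ∣ (a : ℤ) - b := by
        intro a b hba hab
        have h1 : E (tau ^ (a - b)) 1 := by
          have h0 : E (tau ^ ((a - b) + b)) (tau ^ (0 + b)) := by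
            rw [Nat.sub_add_cancel hba, zero_add]; exact hab
          simpa using hcancel _ _ _ h0
        set d := a - b with hdd
        have h2 : E (tau ^ d) (tau ^ (n * (d / n))) := E.trans h1 (E.symm (hmul (d / n)))
        have h3 : E (tau ^ (d % n)) 1 := by
          have h0 : E (tau ^ ((d % n) + n * (d / n))) (tau ^ (0 + n * (d / n))) := by
            rw [Nat.mod_add_div d n, zero_add]
            exact h2
          simpa using hcancel _ _ _ h0
        have hr0 : d % n = 0 := by
          by_contra hr
          exact hmin (d % n) (Nat.mod_lt _ (by omega)) ⟨by omega, h3⟩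
        have hdvd : (n : ℤ) ∣ (d : ℤ) :=
          Int.natCast_dvd_natCast.mpr (Nat.dvd_of_mod_eq_zero hr0)
        have hcast : (d : ℤ) = (a : ℤ) - b := by omega
        rwa [hcast] at hdvd
      have keybwd : ∀ a b : ℕ, b ≤ a → (n : ℤ) ∣ (a : ℤ) - b → E (tau ^ a) (tau ^ b) := by
        intro a b hba hdvd
        have hnat : n ∣ a - b := by
          have : ((a - b : ℕ) : ℤ) = (a : ℤ) - b := by omega
          exact Int.natCast_dvd_natCast.mp (this ▸ hdvd)
        obtain ⟨k, hk⟩ := hnat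
        have h1 := E.mul (hmul k) (E.refl (tau ^ b))
        rw [one_mul, ← pow_add] at h1
        have : n * k + b = a := by omega
        rwa [this] at h1
      intro x y
      constructor
      · intro hxy
        rcases eq_or_ne x 0 with rfl | hx0
        · exact Or.inl ⟨rfl, hzero y (E.symm hxy)⟩
        obtain ⟨a, rfl⟩ := exists_tau_pow hx0
        have hy0 : y ≠ 0 := fun h0 => hne0 a (h0 ▸ hxy)
        obtain ⟨b, rfl⟩ := exists_tau_pow hy0
        refine Or.inr ⟨a, b, rfl, rfl, ?_⟩
        rcases le_total b a with hba | hba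
        · exact keyfwd a b hba hxy
        · have h5 := keyfwd b a hba (E.symm hxy)
          have h6 := dvd_neg.mpr h5
          rwa [neg_sub] at h6
      · rintro (⟨rfl, rfl⟩ | ⟨a, b, rfl, rfl, hdvd⟩)
        · exact E.refl 0
        · rcases le_total b a with hba | hba
          · exact keybwd a b hba hdvd
          · exact E.symm (keybwd b a hba (by rw [← neg_sub]; exact dvd_neg.mpr hdvd))

/-- The prime congruences on `C = {0, 1, τ, τ², …}` are exactly the diagonal `Δ`, the
congruence `τ ∼ 0`, and the congruences `τⁿ ∼ 1` for `n ≥ 1`; and these are pairwise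
distinct. -/
theorem primeCon_freeMonoidZero_classification :
    (∀ E : Con FreeMonoidZero,
      IsPrimeCon E ↔
        (IsDiagCon E ∨ IsTauZeroCon E ∨ ∃ n : ℕ, 1 ≤ n ∧ IsTauNCon n E)) ∧
    (∀ E : Con FreeMonoidZero, ¬ (IsDiagCon E ∧ IsTauZeroCon E)) ∧
    (∀ (E : Con FreeMonoidZero) (n : ℕ), 1 ≤ n → ¬ (IsDiagCon E ∧ IsTauNCon n E)) ∧
    (∀ (E : Con FreeMonoidZero) (n : ℕ), 1 ≤ n → ¬ (IsTauZeroCon E ∧ IsTauNCon n E)) ∧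
    (∀ (E : Con FreeMonoidZero) (n m : ℕ), 1 ≤ n → 1 ≤ m → n ≠ m →
      ¬ (IsTauNCon n E ∧ IsTauNCon m E)) := by
  refine ⟨?_, ?_, ?_, ?_, ?_⟩
  · intro E
    constructor
    · exact prime_classify
    · rintro (h | h | ⟨n, -, h⟩)
      · exact diag_prime h
      · exact tauZero_prime h
      · exact tauN_prime h
  · intro E ⟨hD, hTZ⟩
    have h1 : E tau (tau * tau) := (hTZ _ _).mpr (Or.inr ⟨tau_ne_one,
      fun hc => tau_ne_one (tau_mul_eq_one hc).1⟩)
    have h2 : tau = tau * tau := (hD _ _).mp h1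
    have : (1 : ℕ) = 2 := tau_pow_inj (a := 1) (b := 2) (by rw [pow_one, pow_two]; exact h2)
    omega
  · intro E n hn ⟨hD, hTN⟩
    have h1 : E (tau ^ n) (tau ^ 0) := (tauN_pow_iff hTN n 0).mpr (by simp)
    have h2 : n = 0 := tau_pow_inj ((hD _ _).mp h1)
    omega
  · intro E n hn ⟨hTZ, hTN⟩
    have h1 : E tau 0 := (hTZ _ _).mpr (Or.inr ⟨tau_ne_one, fun hc => one_ne_zero hc.symm⟩)
    rcases (hTN _ _).mp h1 with ⟨h0, -⟩ | ⟨a, b, -, h0, -⟩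
    · exact tau_pow_ne_zero 1 (by rw [pow_one]; exact h0)
    · exact tau_pow_ne_zero b h0.symm
  · intro E n m hn hm hnm ⟨hN, hM⟩
    have h1 : E (tau ^ n) (tau ^ 0) := (tauN_pow_iff hN n 0).mpr (by simp)
    have h2 : E (tau ^ m) (tau ^ 0) := (tauN_pow_iff hM m 0).mpr (by simp)
    have hd1 : (m : ℤ) ∣ (n : ℤ) := by simpa using (tauN_pow_iff hM n 0).mp h1
    have hd2 : (n : ℤ) ∣ (m : ℤ) := by simpa using (tauN_pow_iff hN m 0).mp h2
    exact hnm (Nat.dvd_antisymm (Int.natCast_dvd_natCast.mp hd2) (Int.natCast_dvd_natCast.mp hd1))
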